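/- Hessian of the Kullback–Leibler divergence equals the Fisher information matrix: let X be a finite nonempty set and p : ℝ^n × X → ℝ a parametrized family with p(φ,x) > 0 for all (φ,x), Σ_{x∈X} p(φ,x) = 1 for all φ, and φ ↦ p(φ,x) twice continuously differentiable for each x. Fix φ₀ ∈ ℝ^n and define K(φ) = Σ_{x∈X} p(φ,x)·log(p(φ,x)/p(φ₀,x)). Then K(φ₀) = 0, ∇K(φ₀) = 0, and ∇²K(φ₀) = Σ_{x∈X} p(φ₀,x)·∇_φ log p(φ₀,x)·(∇_φ log p(φ₀,x))ᵀ, the Fisher information matrix at φ₀. -/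

import Mathlib

open scoped BigOperators

/-- The Hessian of the Kullback–Leibler divergence equals the
Fisher information matrix: for a smooth strictly positive parametrized family of
probability mass functions `p` on a finite nonempty set `X` and
`K(φ) = ∑_x p(φ,x) log (p(φ,x)/p(φ₀,x))`, one has `K(φ₀) = 0`, `∇K(φ₀) = 0`, and
`∇²K(φ₀) = ∑_x p(φ₀,x) ∇ log p(φ₀,x) (∇ log p(φ₀,x))ᵀ` (stated entrywise). -/
theorem kl_hessian_eq_fisher {n : ℕ} {X : Type} [Fintype X] [Nonempty X]
    (p : (Fin n → ℝ) → X → ℝ)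
    (hp0 : ∀ φ x, 0 < p φ x) (hp1 : ∀ φ, ∑ x : X, p φ x = 1)
    (hpC : ∀ x, ContDiff ℝ 2 fun φ : Fin n → ℝ => p φ x)
    (φ₀ : Fin n → ℝ) :
    (∑ x : X, p φ₀ x * Real.log (p φ₀ x / p φ₀ x)) = 0 ∧
    fderiv ℝ (fun φ : Fin n → ℝ => ∑ x : X, p φ x * Real.log (p φ x / p φ₀ x)) φ₀ = 0 ∧
    ∀ i j : Fin n,
      fderiv ℝ (fun φ : Fin n → ℝ =>
          fderiv ℝ (fun φ' : Fin n → ℝ =>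
            ∑ x : X, p φ' x * Real.log (p φ' x / p φ₀ x)) φ (Pi.single j 1)) φ₀
          (Pi.single i 1)
        =
      ∑ x : X, p φ₀ x *
        (fderiv ℝ (fun φ : Fin n → ℝ => Real.log (p φ x)) φ₀ (Pi.single i 1) *
          fderiv ℝ (fun φ : Fin n → ℝ => Real.log (p φ x)) φ₀ (Pi.single j 1)) := by
  classical
  have hne : ∀ φ x, p φ x ≠ 0 := fun φ x => (hp0 φ x).ne'
  have hdiffp : ∀ x, Differentiable ℝ (fun φ => p φ x) :=
    fun x => (hpC x).differentiable (by norm_num)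
  -- derivative of the log-ratio
  have hlog : ∀ x φ, HasFDerivAt (fun φ => Real.log (p φ x / p φ₀ x))
      ((p φ x)⁻¹ • fderiv ℝ (fun φ => p φ x) φ) φ := by
    intro x φ
    have heq : (fun φ => Real.log (p φ x / p φ₀ x))
        = fun φ => Real.log (p φ x) - Real.log (p φ₀ x) := by
      funext ψ; rw [Real.log_div (hne ψ x) (hne φ₀ x)]
    rw [heq]
    simpa using ((hdiffp x φ).hasFDerivAt.log (hne φ x)).sub_const (Real.log (p φ₀ x))
  -- derivative of each summand of K
  have hF : ∀ x φ, HasFDerivAt (fun φ => p φ x * Real.log (p φ x / p φ₀ x))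
      ((Real.log (p φ x / p φ₀ x) + 1) • fderiv ℝ (fun φ => p φ x) φ) φ := by
    intro x φ
    have h := (hdiffp x φ).hasFDerivAt.mul (hlog x φ)
    refine h.congr_fderiv ?_
    ext v
    simp only [ContinuousLinearMap.add_apply, ContinuousLinearMap.smul_apply, smul_eq_mul]
    rw [mul_inv_cancel_left₀ (hne φ x)]
    ring
  -- derivative of K
  have hK : ∀ φ, HasFDerivAt (fun φ => ∑ x : X, p φ x * Real.log (p φ x / p φ₀ x))
      (∑ x : X, (Real.log (p φ x / p φ₀ x) + 1) • fderiv ℝ (fun φ => p φ x) φ) φ :=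
    fun φ => HasFDerivAt.fun_sum fun x _ => hF x φ
  -- the sum of derivatives of p vanishes
  have hsum0 : ∀ φ, (∑ x : X, fderiv ℝ (fun φ => p φ x) φ) = 0 := by
    intro φ
    have h1 : HasFDerivAt (fun φ => ∑ x : X, p φ x)
        (∑ x : X, fderiv ℝ (fun φ => p φ x) φ) φ :=
      HasFDerivAt.fun_sum fun x _ => (hdiffp x φ).hasFDerivAt
    have h2 : HasFDerivAt (fun φ : Fin n → ℝ => ∑ x : X, p φ x) (0 : (Fin n → ℝ) →L[ℝ] ℝ) φ := by
      have heq : (fun φ : Fin n → ℝ => ∑ x : X, p φ x) = fun _ => 1 := funext hp1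
      rw [heq]; exact hasFDerivAt_const 1 φ
    exact h1.unique h2
  refine ⟨?_, ?_, ?_⟩
  · exact Finset.sum_eq_zero fun x _ => by
      rw [div_self (hne φ₀ x), Real.log_one, mul_zero]
  · rw [(hK φ₀).fderiv]
    have : ∀ x ∈ Finset.univ,
        (Real.log (p φ₀ x / p φ₀ x) + 1) • fderiv ℝ (fun φ => p φ x) φ₀
          = fderiv ℝ (fun φ => p φ x) φ₀ := by
      intro x _; rw [div_self (hne φ₀ x), Real.log_one, zero_add, one_smul]
    rw [Finset.sum_congr rfl this, hsum0]
  · intro i j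
    -- rewrite inner fderiv as an explicit sum
    have hgfun : (fun φ => fderiv ℝ (fun φ' : Fin n → ℝ =>
          ∑ x : X, p φ' x * Real.log (p φ' x / p φ₀ x)) φ (Pi.single j 1))
        = fun φ => ∑ x : X, (Real.log (p φ x / p φ₀ x) + 1)
            * (fderiv ℝ (fun φ => p φ x) φ (Pi.single j 1)) := by
      funext φ
      rw [(hK φ).fderiv]
      simp [ContinuousLinearMap.sum_apply]
    rw [hgfun]
    -- differentiability of directional derivatives of p
    have hq : ∀ x, Differentiable ℝ
        (fun φ => fderiv ℝ (fun φ => p φ x) φ (Pi.single j 1)) := by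
      intro x
      have h1 : ContDiff ℝ 1 (fderiv ℝ (fun φ => p φ x)) :=
        (hpC x).fderiv_right (by norm_num)
      exact (h1.clm_apply contDiff_const).differentiable (by norm_num)
    -- derivative of each summand at φ₀
    have hL : ∀ x, HasFDerivAt
        (fun φ => (Real.log (p φ x / p φ₀ x) + 1)
            * (fderiv ℝ (fun φ => p φ x) φ (Pi.single j 1)))
        (fderiv ℝ (fun φ => fderiv ℝ (fun φ => p φ x) φ (Pi.single j 1)) φ₀
          + (fderiv ℝ (fun φ => p φ x) φ₀ (Pi.single j 1))
              • ((p φ₀ x)⁻¹ • fderiv ℝ (fun φ => p φ x) φ₀)) φ₀ := by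
      intro x
      have hu : HasFDerivAt (fun φ => Real.log (p φ x / p φ₀ x) + 1)
          ((p φ₀ x)⁻¹ • fderiv ℝ (fun φ => p φ x) φ₀) φ₀ := by
        simpa using (hlog x φ₀).add_const 1
      have hv := (hq x φ₀).hasFDerivAt
      have h := hu.mul hv
      rw [div_self (hne φ₀ x), Real.log_one, zero_add, one_smul] at h
      exact h
    have hsum := HasFDerivAt.fun_sum (fun x (_ : x ∈ Finset.univ) => hL x)
    rw [hsum.fderiv]
    -- second-derivative terms sum to zero
    have hA0 : (∑ x : X, fderiv ℝ
        (fun φ => fderiv ℝ (fun φ => p φ x) φ (Pi.single j 1)) φ₀) = 0 := by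
      have h1 : HasFDerivAt (fun φ => ∑ x : X, fderiv ℝ (fun φ => p φ x) φ (Pi.single j 1))
          (∑ x : X, fderiv ℝ (fun φ => fderiv ℝ (fun φ => p φ x) φ (Pi.single j 1)) φ₀) φ₀ :=
        HasFDerivAt.fun_sum fun x _ => (hq x φ₀).hasFDerivAt
      have h2 : HasFDerivAt
          (fun φ : Fin n → ℝ => ∑ x : X, fderiv ℝ (fun φ => p φ x) φ (Pi.single j 1)) (0 : (Fin n → ℝ) →L[ℝ] ℝ) φ₀ := by
        have heq : (fun φ : Fin n → ℝ => ∑ x : X, fderiv ℝ (fun φ => p φ x) φ (Pi.single j 1))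
            = fun _ => 0 := by
          funext φ
          rw [← ContinuousLinearMap.sum_apply, hsum0]
          simp
        rw [heq]; exact hasFDerivAt_const 0 φ₀
      exact h1.unique h2
    -- the fderiv of log p
    have hlogp : ∀ x, fderiv ℝ (fun φ => Real.log (p φ x)) φ₀
        = (p φ₀ x)⁻¹ • fderiv ℝ (fun φ => p φ x) φ₀ :=
      fun x => ((hdiffp x φ₀).hasFDerivAt.log (hne φ₀ x)).fderiv
    have step : (∑ x : X, (fderiv ℝ (fun φ => fderiv ℝ (fun φ => p φ x) φ (Pi.single j 1)) φ₀
          + (fderiv ℝ (fun φ => p φ x) φ₀ (Pi.single j 1))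
              • ((p φ₀ x)⁻¹ • fderiv ℝ (fun φ => p φ x) φ₀))) (Pi.single i 1)
        = ∑ x : X,
          (fderiv ℝ (fun φ => fderiv ℝ (fun φ => p φ x) φ (Pi.single j 1)) φ₀ (Pi.single i 1)
          + (fderiv ℝ (fun φ => p φ x) φ₀ (Pi.single j 1))
              * ((p φ₀ x)⁻¹ * fderiv ℝ (fun φ => p φ x) φ₀ (Pi.single i 1))) := by
      rw [ContinuousLinearMap.sum_apply]
      exact Finset.sum_congr rfl fun x _ => by simp
    rw [step, Finset.sum_add_distrib]
    have z1 : (∑ x : X, fderiv ℝ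
        (fun φ => fderiv ℝ (fun φ => p φ x) φ (Pi.single j 1)) φ₀ (Pi.single i 1)) = 0 := by
      rw [← ContinuousLinearMap.sum_apply, hA0]; simp
    rw [z1, zero_add]
    refine Finset.sum_congr rfl fun x _ => ?_
    rw [hlogp x]
    simp only [ContinuousLinearMap.smul_apply, smul_eq_mul]
    field_simp [hne φ₀ x]
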